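/- arXiv:1805.10998 — 6 statements merged into one kernel-verified Lean document; each statement's English description precedes it below -/
import Mathlib

section
/- For every n ≥ 1 and every k ≥ 0, the set of CLS-sequences of length n containing exactly k occurrences of the letter X is finite and its cardinality equals the Legendre-Stirling number of the second kind LS(n,k). -/
/-- Legendre-Stirling numbers of the second kind. -/
def LS : ℕ → ℕ → ℕ
  | 0, 0 => 1
  | 0, _ + 1 => 0
  | _ + 1, 0 => 0
  | n + 1, k + 1 => LS n k + (k + 1) * (k + 2) * LS n (k + 1)

/-- The alphabet for CLS-sequences: a letter `X`, letters `A i j`,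
letters `B s` and letters `Bbar s`. -/
inductive CLSLetter where
  | X : CLSLetter
  | A : ℕ → ℕ → CLSLetter
  | B : ℕ → CLSLetter
  | Bbar : ℕ → CLSLetter
  deriving DecidableEq

/-- The number of occurrences of the letter `X` among the first `m` entries
(indices `l` with `l < m` in 0-indexed notation). -/
def nX {n : ℕ} (y : Fin n → CLSLetter) (m : ℕ) : ℕ :=
  (Finset.univ.filter (fun l : Fin n => (l : ℕ) < m ∧ y l = CLSLetter.X)).card

/-- `y` is a CLS-sequence: `y₁ = X` and each later letter obeys the index
constraints with respect to the number of `X`'s occurring strictly before it. -/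
def IsCLS {n : ℕ} (y : Fin n → CLSLetter) : Prop :=
  (∀ i : Fin n, (i : ℕ) = 0 → y i = CLSLetter.X) ∧
  ∀ i : Fin n, (i : ℕ) ≠ 0 →
    match y i with
    | CLSLetter.X => True
    | CLSLetter.A a b =>
        1 ≤ a ∧ a ≤ nX y (i : ℕ) ∧ 1 ≤ b ∧ b ≤ nX y (i : ℕ) ∧ a ≠ b
    | CLSLetter.B s => 1 ≤ s ∧ s ≤ nX y (i : ℕ)
    | CLSLetter.Bbar s => 1 ≤ s ∧ s ≤ nX y (i : ℕ)

/-- The constraint that a letter must satisfy given `m` previous `X`'s. -/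
def Ok : CLSLetter → ℕ → Prop
  | CLSLetter.X, _ => True
  | CLSLetter.A a b, m => 1 ≤ a ∧ a ≤ m ∧ 1 ≤ b ∧ b ≤ m ∧ a ≠ b
  | CLSLetter.B s, m => 1 ≤ s ∧ s ≤ m
  | CLSLetter.Bbar s, m => 1 ≤ s ∧ s ≤ m

lemma isCLS_iff {n : ℕ} (y : Fin n → CLSLetter) :
    IsCLS y ↔ (∀ i : Fin n, (i : ℕ) = 0 → y i = CLSLetter.X) ∧
      ∀ i : Fin n, (i : ℕ) ≠ 0 → Ok (y i) (nX y (i : ℕ)) := by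
  constructor
  · rintro ⟨h0, h1⟩
    refine ⟨h0, fun i hi => ?_⟩
    have h := h1 i hi
    cases hc : y i <;> rw [hc] at h <;> exact h
  · rintro ⟨h0, h1⟩
    refine ⟨h0, fun i hi => ?_⟩
    have h := h1 i hi
    cases hc : y i <;> rw [hc] at h <;> exact h

lemma nX_snoc {n : ℕ} (z : Fin n → CLSLetter) (c : CLSLetter) (m : ℕ) (hm : m ≤ n) :
    nX (Fin.snoc z c) m = nX z m := by
  unfold nX
  rw [Finset.card_filter, Finset.card_filter, Fin.sum_univ_castSucc]
  simp [Fin.snoc_castSucc, Fin.snoc_last, Nat.not_lt.mpr hm]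

lemma countX_snoc {n : ℕ} (z : Fin n → CLSLetter) (c : CLSLetter) :
    (Finset.univ.filter (fun l : Fin (n+1) =>
        (Fin.snoc z c : Fin (n+1) → CLSLetter) l = CLSLetter.X)).card
      = (Finset.univ.filter (fun l : Fin n => z l = CLSLetter.X)).card
        + (if c = CLSLetter.X then 1 else 0) := by
  rw [Finset.card_filter, Finset.card_filter, Fin.sum_univ_castSucc]
  simp [Fin.snoc_castSucc, Fin.snoc_last]

lemma nX_top {n : ℕ} (z : Fin n → CLSLetter) :
    nX z n = (Finset.univ.filter (fun l : Fin n => z l = CLSLetter.X)).card := by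
  unfold nX
  congr 1
  apply Finset.filter_congr
  intro x _
  simp [x.is_lt]

lemma snoc_inj {n : ℕ} {z z' : Fin n → CLSLetter} {c c' : CLSLetter}
    (h : (Fin.snoc z c : Fin (n+1) → CLSLetter) = Fin.snoc z' c') : z = z' ∧ c = c' := by
  constructor
  · funext j
    have := congrFun h j.castSucc
    simpa using this
  · have := congrFun h (Fin.last n)
    simpa using this

lemma isCLS_snoc {n : ℕ} (hn : 1 ≤ n) (z : Fin n → CLSLetter) (c : CLSLetter) :
    IsCLS (Fin.snoc z c) ↔ IsCLS z ∧ Ok c (nX z n) := by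
  rw [isCLS_iff, isCLS_iff]
  constructor
  · rintro ⟨h0, h1⟩
    refine ⟨⟨fun i hi => ?_, fun i hi => ?_⟩, ?_⟩
    · have := h0 i.castSucc (by simpa using hi)
      simpa using this
    · have := h1 i.castSucc (by simpa using hi)
      rw [Fin.snoc_castSucc] at this
      simpa [nX_snoc z c i (le_of_lt i.is_lt)] using this
    · have := h1 (Fin.last n) (by simp [Fin.val_last]; omega)
      rw [Fin.snoc_last] at this
      simpa [nX_snoc z c n le_rfl] using this
  · rintro ⟨⟨h0, h1⟩, hc⟩
    constructor
    · intro i hi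
      induction i using Fin.lastCases with
      | last => simp [Fin.val_last] at hi; omega
      | cast j =>
          rw [Fin.snoc_castSucc]
          exact h0 j (by simpa using hi)
    · intro i hi
      induction i using Fin.lastCases with
      | last =>
          rw [Fin.snoc_last]
          simpa [Fin.val_last, nX_snoc z c n le_rfl] using hc
      | cast j =>
          rw [Fin.snoc_castSucc]
          have := h1 j (by simpa using hi)
          simpa [nX_snoc z c j (le_of_lt j.is_lt)] using this

/-- The allowed non-`X` letters when `m` `X`'s occur before. -/
def lset (m : ℕ) : Finset CLSLetter :=
  ((((Finset.Icc 1 m) ×ˢ (Finset.Icc 1 m)).filter (fun p => p.1 ≠ p.2)).image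
      (fun p => CLSLetter.A p.1 p.2))
  ∪ ((Finset.Icc 1 m).image CLSLetter.B)
  ∪ ((Finset.Icc 1 m).image CLSLetter.Bbar)

lemma mem_lset {c : CLSLetter} {m : ℕ} :
    c ∈ lset m ↔ (c ≠ CLSLetter.X ∧ Ok c m) := by
  cases c <;> simp [lset, Ok] <;> aesop

lemma card_lset (m : ℕ) : (lset m).card = m * (m + 1) := by
  have hA : Function.Injective (fun p : ℕ × ℕ => CLSLetter.A p.1 p.2) := by
    rintro ⟨a, b⟩ ⟨a', b'⟩ h
    simp_all
  have hdiag : (((Finset.Icc 1 m) ×ˢ (Finset.Icc 1 m)).filter (fun p => p.1 = p.2))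
      = (Finset.Icc 1 m).image (fun a => (a, a)) := by
    ext ⟨a, b⟩
    simp only [Finset.mem_filter, Finset.mem_product, Finset.mem_image, Prod.mk.injEq]
    constructor
    · rintro ⟨⟨h1, _⟩, rfl⟩; exact ⟨a, h1, rfl, rfl⟩
    · rintro ⟨x, hx, rfl, rfl⟩; exact ⟨⟨hx, hx⟩, rfl⟩
  have hsplit := Finset.card_filter_add_card_filter_not
    (s := (Finset.Icc 1 m) ×ˢ (Finset.Icc 1 m)) (p := fun p => p.1 = p.2)
  rw [hdiag] at hsplit
  rw [Finset.card_image_of_injective _ (fun a b h => by simpa using h)] at hsplit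
  rw [Finset.card_product, Nat.card_Icc] at hsplit
  simp only [Nat.add_sub_cancel] at hsplit
  rw [lset]
  rw [Finset.card_union_of_disjoint, Finset.card_union_of_disjoint]
  · rw [Finset.card_image_of_injective _ hA,
      Finset.card_image_of_injective _ (fun a b h => by simpa using h),
      Finset.card_image_of_injective _ (fun a b h => by simpa using h),
      Nat.card_Icc]
    simp only [Nat.add_sub_cancel, ne_eq]
    have : m * (m + 1) = m * m + m := by ring
    omega
  · rw [Finset.disjoint_left]
    intro a ha hb
    simp only [Finset.mem_image] at ha hb
    obtain ⟨x, _, rfl⟩ := ha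
    obtain ⟨y, _, h⟩ := hb
    exact CLSLetter.noConfusion h
  · rw [Finset.disjoint_left]
    intro a ha hb
    simp only [Finset.mem_union, Finset.mem_image] at ha hb
    obtain ⟨y, _, h⟩ := hb
    rcases ha with ⟨x, _, rfl⟩ | ⟨x, _, rfl⟩ <;> exact CLSLetter.noConfusion h

lemma set_ncard_prod {α β : Type*} (s : Set α) (t : Set β) :
    (s ×ˢ t).ncard = s.ncard * t.ncard := by
  rw [← Nat.card_coe_set_eq, ← Nat.card_coe_set_eq, ← Nat.card_coe_set_eq,
    Nat.card_congr (Equiv.Set.prod s t), Nat.card_prod]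

lemma cls_main : ∀ n : ℕ, 1 ≤ n → ∀ k : ℕ,
    ({y : Fin n → CLSLetter | IsCLS y ∧
        (Finset.univ.filter (fun l : Fin n => y l = CLSLetter.X)).card = k}).Finite ∧
    ({y : Fin n → CLSLetter | IsCLS y ∧
        (Finset.univ.filter (fun l : Fin n => y l = CLSLetter.X)).card = k}).ncard
      = LS n k := by
  intro n hn'
  induction n, hn' using Nat.le_induction with
  | base =>
      intro k
      have hchar : ∀ k : ℕ,
          {y : Fin 1 → CLSLetter | IsCLS y ∧
            (Finset.univ.filter (fun l : Fin 1 => y l = CLSLetter.X)).card = k}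
          = if k = 1 then {fun _ => CLSLetter.X} else ∅ := by
        intro k
        ext y
        have hcount : (Finset.univ.filter
            (fun l : Fin 1 => (fun _ => CLSLetter.X : Fin 1 → CLSLetter) l = CLSLetter.X)).card
            = 1 := by simp
        by_cases hk : k = 1
        · subst hk
          simp only [Set.mem_setOf_eq, if_pos rfl, Set.mem_singleton_iff]
          constructor
          · rintro ⟨⟨h0, _⟩, _⟩
            funext i
            have : (i : ℕ) = 0 := by omega
            exact h0 i this
          · rintro rfl
            refine ⟨⟨fun i _ => rfl, fun i hi => ?_⟩, hcount⟩
            exact absurd (by omega : (i : ℕ) = 0) hi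
        · simp only [Set.mem_setOf_eq, if_neg hk, Set.mem_empty_iff_false, iff_false]
          rintro ⟨⟨h0, _⟩, hcnt⟩
          apply hk
          have hy : y = (fun _ => CLSLetter.X) := by
            funext i; exact h0 i (by omega)
          rw [hy] at hcnt
          rw [hcount] at hcnt
          exact hcnt.symm
      rw [hchar]
      by_cases hk : k = 1
      · subst hk
        simp [LS]
      · rw [if_neg hk]
        refine ⟨Set.finite_empty, ?_⟩
        rw [Set.ncard_empty]
        match k, hk with
        | 0, _ => rfl
        | (j+2), _ => simp [LS]
  | succ n hn IH =>
      intro k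
      match k with
      | 0 =>
          have hempty : {y : Fin (n+1) → CLSLetter | IsCLS y ∧
              (Finset.univ.filter (fun l : Fin (n+1) => y l = CLSLetter.X)).card = 0} = ∅ := by
            ext y
            simp only [Set.mem_setOf_eq, Set.mem_empty_iff_false, iff_false]
            rintro ⟨⟨h0, _⟩, hcnt⟩
            have h0' : y 0 = CLSLetter.X := h0 0 rfl
            have : (0 : Fin (n+1)) ∈
                Finset.univ.filter (fun l : Fin (n+1) => y l = CLSLetter.X) := by
              simp [h0']
            rw [Finset.card_eq_zero] at hcnt
            rw [hcnt] at this
            exact absurd this (Finset.notMem_empty _)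
          rw [hempty]
          exact ⟨Set.finite_empty, by rw [Set.ncard_empty]; rfl⟩
      | (j+1) =>
          set T : ℕ → Set (Fin n → CLSLetter) := fun m =>
            {y : Fin n → CLSLetter | IsCLS y ∧
              (Finset.univ.filter (fun l : Fin n => y l = CLSLetter.X)).card = m} with hT
          set A1 : Set (Fin (n+1) → CLSLetter) :=
            (fun z => (Fin.snoc z CLSLetter.X : Fin (n+1) → CLSLetter)) '' (T j) with hA1
          set A2 : Set (Fin (n+1) → CLSLetter) :=
            (fun p : (Fin n → CLSLetter) × CLSLetter =>
              (Fin.snoc p.1 p.2 : Fin (n+1) → CLSLetter)) ''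
              ((T (j+1)) ×ˢ ((lset (j+1) : Finset CLSLetter) : Set CLSLetter)) with hA2
          have key : {y : Fin (n+1) → CLSLetter | IsCLS y ∧
              (Finset.univ.filter (fun l : Fin (n+1) => y l = CLSLetter.X)).card = j+1}
              = A1 ∪ A2 := by
            ext y
            constructor
            · rintro ⟨hcls, hcount⟩
              have hy : y = Fin.snoc (Fin.init y) (y (Fin.last n)) :=
                (Fin.snoc_init_self y).symm
              set z := Fin.init y with hz
              set c := y (Fin.last n) with hcdef
              have hcls' : IsCLS (Fin.snoc z c : Fin (n+1) → CLSLetter) := by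
                rw [← hy]; exact hcls
              have hcount' : (Finset.univ.filter
                  (fun l : Fin (n+1) => (Fin.snoc z c : Fin (n+1) → CLSLetter) l
                    = CLSLetter.X)).card = j+1 := by
                rw [← hy]; exact hcount
              obtain ⟨hzc, hok⟩ := (isCLS_snoc hn z c).mp hcls'
              rw [countX_snoc] at hcount'
              by_cases hX : c = CLSLetter.X
              · left
                refine ⟨z, ⟨hzc, ?_⟩, ?_⟩
                · rw [if_pos hX] at hcount'; omega
                · rw [hX] at hy; exact hy.symm
              · right
                have hcnt : (Finset.univ.filter
                    (fun l : Fin n => z l = CLSLetter.X)).card = j+1 := by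
                  rw [if_neg hX] at hcount'; omega
                refine ⟨(z, c), ⟨⟨hzc, hcnt⟩, ?_⟩, hy.symm⟩
                rw [Finset.mem_coe, mem_lset]
                refine ⟨hX, ?_⟩
                have hnx : nX z n = j + 1 := by rw [nX_top, hcnt]
                rw [← hnx]
                exact hok
            · rintro (⟨z, ⟨hz, hcnt⟩, rfl⟩ | ⟨⟨z, c⟩, ⟨⟨hz, hcnt⟩, hcl⟩, rfl⟩)
              · refine ⟨(isCLS_snoc hn _ _).mpr ⟨hz, trivial⟩, ?_⟩
                rw [countX_snoc, hcnt, if_pos rfl]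
              · rw [Finset.mem_coe, mem_lset] at hcl
                have hnx : nX z n = j + 1 := by rw [nX_top, hcnt]
                refine ⟨(isCLS_snoc hn _ _).mpr ⟨hz, by rw [hnx]; exact hcl.2⟩, ?_⟩
                rw [countX_snoc, hcnt, if_neg hcl.1]
          have inj1 : Function.Injective
              (fun z : Fin n → CLSLetter => (Fin.snoc z CLSLetter.X : Fin (n+1) → CLSLetter)) :=
            fun a b h => (snoc_inj h).1
          have inj2 : Function.Injective
              (fun p : (Fin n → CLSLetter) × CLSLetter =>
                (Fin.snoc p.1 p.2 : Fin (n+1) → CLSLetter)) := by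
            rintro ⟨a, b⟩ ⟨a', b'⟩ h
            obtain ⟨h1, h2⟩ := snoc_inj h
            simp_all
          have f1 : A1.Finite := ((IH j).1).image _
          have f2 : A2.Finite := (((IH (j+1)).1).prod (lset (j+1)).finite_toSet).image _
          have hdisj : Disjoint A1 A2 := by
            rw [Set.disjoint_left]
            rintro y ⟨z, _, rfl⟩ ⟨⟨z', c'⟩, ⟨_, hc'⟩, he⟩
            have := (snoc_inj he).2
            rw [Finset.mem_coe, mem_lset] at hc'
            exact hc'.1 this
          constructor
          · rw [key]; exact f1.union f2
          · rw [key, Set.ncard_union_eq hdisj f1 f2, hA1, hA2,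
              Set.ncard_image_of_injective _ inj1,
              Set.ncard_image_of_injective _ inj2,
              set_ncard_prod, Set.ncard_coe_finset, card_lset,
              (IH j).2, (IH (j+1)).2]
            show LS n j + LS n (j+1) * ((j+1) * (j+2)) = LS (n+1) (j+1)
            show LS n j + LS n (j+1) * ((j+1) * (j+2))
              = LS n j + (j + 1) * (j + 2) * LS n (j + 1)
            ring

theorem cls_card (n k : ℕ) (hn : 1 ≤ n) :
    ({y : Fin n → CLSLetter | IsCLS y ∧
        (Finset.univ.filter (fun l : Fin n => y l = CLSLetter.X)).card = k}).Finite ∧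
    ({y : Fin n → CLSLetter | IsCLS y ∧
        (Finset.univ.filter (fun l : Fin n => y l = CLSLetter.X)).card = k}).ncard
      = LS n k := cls_main n hn k
end

section
/- For every positive integer k and every n ≥ 1, LS(n+k, n) = 2^k · Σ over all k-tuples (t_1, t_2, …, t_k) of integers with 1 ≤ t_1 ≤ t_2 ≤ ⋯ ≤ t_k ≤ n of the product ∏_{j=1}^{k} C(t_j + 1, 2), where C(·,·) denotes the usual binomial coefficient. (Equivalently, LS(n+k,n) = 2^k Σ_{t_k=1}^{n} C(t_k+1,2) Σ_{t_{k-1}=1}^{t_k} C(t_{k-1}+1,2) ⋯ Σ_{t_1=1}^{t_2} C(t_1+1,2).) -/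
def G : ℕ → ℕ → ℕ
  | 0, _ => 1
  | k + 1, m => ∑ t ∈ Finset.Icc 1 m, Nat.choose (t + 1) 2 * G k t

lemma LS_eq_zero_of_lt : ∀ n k, n < k → LS n k = 0
  | 0, _ + 1, _ => rfl
  | n + 1, k + 1, h => by
    rw [LS, LS_eq_zero_of_lt n k (by omega), LS_eq_zero_of_lt n (k+1) (by omega)]
    ring

lemma LS_diag : ∀ n, LS n n = 1
  | 0 => rfl
  | n + 1 => by
    rw [LS, LS_diag n, LS_eq_zero_of_lt n (n+1) (by omega)]
    ring

lemma two_choose (m : ℕ) : 2 * Nat.choose (m + 1) 2 = m * (m + 1) := by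
  induction m with
  | zero => rfl
  | succ m ih =>
    rw [show m + 1 + 1 = (m + 1) + 1 from rfl, Nat.choose_succ_succ (m+1) 1,
      Nat.mul_add, ih, Nat.choose_one_right]
    ring

lemma Icc_one_succ (m : ℕ) : Finset.Icc 1 (m + 1) = insert (m + 1) (Finset.Icc 1 m) := by
  ext x; simp [Finset.mem_Icc]; omega

lemma G_succ (k m : ℕ) :
    G (k + 1) (m + 1) = G (k + 1) m + Nat.choose (m + 2) 2 * G k (m + 1) := by
  rw [G, G, Icc_one_succ, Finset.sum_insert (by simp)]
  ring

lemma LS_G : ∀ k m, LS (m + k) m = 2 ^ k * G k m := by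
  intro k
  induction k with
  | zero => intro m; simp [G, LS_diag]
  | succ k ih =>
    intro m
    induction m with
    | zero =>
      show LS (k + 1) 0 = _
      rw [LS, G]
      simp
    | succ m ihm =>
      have h1 : m + 1 + (k + 1) = (m + (k + 1)) + 1 := by omega
      rw [h1, LS]
      rw [ihm, show m + (k + 1) = (m + 1) + k from by omega, ih (m + 1), G_succ]
      have h2 : 2 * Nat.choose (m + 2) 2 = (m + 1) * (m + 2) := two_choose (m + 1)
      conv_rhs => rw [Nat.mul_add]
      congr 1
      rw [← h2]
      ring


lemma snoc_cond {n k m : ℕ} (x : Fin (n + 1)) (s : Fin k → Fin (n + 1)) :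
    ((∀ j₁ j₂ : Fin (k + 1), j₁ ≤ j₂ → (Fin.snoc s x : Fin (k+1) → Fin (n+1)) j₁ ≤ (Fin.snoc s x : Fin (k+1) → Fin (n+1)) j₂) ∧
      ∀ j : Fin (k + 1), 1 ≤ ((Fin.snoc s x : Fin (k+1) → Fin (n+1)) j : ℕ) ∧ ((Fin.snoc s x : Fin (k+1) → Fin (n+1)) j : ℕ) ≤ m) ↔
    (((∀ j₁ j₂ : Fin k, j₁ ≤ j₂ → s j₁ ≤ s j₂) ∧
      ∀ j : Fin k, 1 ≤ (s j : ℕ) ∧ (s j : ℕ) ≤ (x : ℕ)) ∧ (1 ≤ (x : ℕ) ∧ (x : ℕ) ≤ m)) := by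
  constructor
  · rintro ⟨hmono, hb⟩
    refine ⟨⟨?_, ?_⟩, ?_⟩
    · intro j₁ j₂ h
      have := hmono j₁.castSucc j₂.castSucc (by simpa [Fin.castSucc_le_castSucc_iff])
      simpa [Fin.snoc_castSucc] using this
    · intro j
      have h1 := hb j.castSucc
      have h2 := hmono j.castSucc (Fin.last k) (Fin.le_last _)
      simp only [Fin.snoc_castSucc, Fin.snoc_last, Fin.le_def] at h1 h2
      exact ⟨h1.1, h2⟩
    · have := hb (Fin.last k); simpa [Fin.snoc_last] using this
  · rintro ⟨⟨hmono, hb⟩, hx1, hx2⟩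
    constructor
    · intro j₁ j₂ h
      induction j₂ using Fin.lastCases with
      | last =>
        induction j₁ using Fin.lastCases with
        | last => exact le_refl _
        | cast i =>
          simp only [Fin.snoc_castSucc, Fin.snoc_last, Fin.le_def]
          exact (hb i).2
      | cast i₂ =>
        induction j₁ using Fin.lastCases with
        | last =>
          exfalso
          have hlt := Fin.castSucc_lt_last i₂
          rw [Fin.le_def] at h
          rw [Fin.lt_def] at hlt
          simp at h hlt
          omega
        | cast i₁ =>
          simp only [Fin.snoc_castSucc]
          exact hmono i₁ i₂ (by simpa [Fin.castSucc_le_castSucc_iff] using h)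
    · intro j
      induction j using Fin.lastCases with
      | last => simp only [Fin.snoc_last]; exact ⟨hx1, hx2⟩
      | cast i =>
        have := hb i
        simp only [Fin.snoc_castSucc]
        omega

lemma sum_chains (n : ℕ) : ∀ (k m : ℕ), m ≤ n →
    (∑ t ∈ Finset.univ.filter (fun t : Fin k → Fin (n + 1) =>
        (∀ j₁ j₂ : Fin k, j₁ ≤ j₂ → t j₁ ≤ t j₂) ∧ ∀ j, 1 ≤ (t j : ℕ) ∧ (t j : ℕ) ≤ m),
      ∏ j : Fin k, Nat.choose ((t j : ℕ) + 1) 2) = G k m := by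
  intro k
  induction k with
  | zero =>
    intro m _
    rw [G, Finset.sum_filter]
    simp
  | succ k ih =>
    intro m hm
    rw [Finset.sum_filter, ← Equiv.sum_comp (Fin.snocEquiv (fun _ => Fin (n + 1))),
      Fintype.sum_prod_type]
    simp only [Fin.snocEquiv_apply]
    have hx : ∀ x : Fin (n + 1),
        (∑ s : Fin k → Fin (n + 1),
          if (∀ j₁ j₂ : Fin (k + 1), j₁ ≤ j₂ → (Fin.snoc s x : Fin (k+1) → Fin (n+1)) j₁ ≤ (Fin.snoc s x : Fin (k+1) → Fin (n+1)) j₂) ∧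
              ∀ j : Fin (k + 1), 1 ≤ ((Fin.snoc s x : Fin (k+1) → Fin (n+1)) j : ℕ) ∧
                ((Fin.snoc s x : Fin (k+1) → Fin (n+1)) j : ℕ) ≤ m then
            ∏ j : Fin (k + 1), Nat.choose (((Fin.snoc s x : Fin (k+1) → Fin (n+1)) j : ℕ) + 1) 2
          else 0)
        = if 1 ≤ (x : ℕ) ∧ (x : ℕ) ≤ m then Nat.choose ((x : ℕ) + 1) 2 * G k (x : ℕ) else 0 := by
      intro x
      by_cases hxm : 1 ≤ (x : ℕ) ∧ (x : ℕ) ≤ m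
      · rw [if_pos hxm, ← ih (x : ℕ) (by omega), Finset.sum_filter, Finset.mul_sum]
        apply Finset.sum_congr rfl
        intro s _
        rw [mul_ite, mul_zero]
        have hprod : (∏ j : Fin (k + 1), Nat.choose (((Fin.snoc s x : Fin (k+1) → Fin (n+1)) j : ℕ) + 1) 2)
            = Nat.choose ((x : ℕ) + 1) 2 * ∏ j : Fin k, Nat.choose ((s j : ℕ) + 1) 2 := by
          rw [Fin.prod_univ_castSucc]
          simp only [Fin.snoc_castSucc, Fin.snoc_last]
          ring
        by_cases hQ : (∀ j₁ j₂ : Fin k, j₁ ≤ j₂ → s j₁ ≤ s j₂) ∧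
            ∀ j : Fin k, 1 ≤ (s j : ℕ) ∧ (s j : ℕ) ≤ (x : ℕ)
        · rw [if_pos hQ, if_pos ((snoc_cond x s).2 ⟨hQ, hxm⟩), hprod]
        · rw [if_neg hQ, if_neg]
          intro hP
          exact hQ ((snoc_cond x s).1 hP).1
      · rw [if_neg hxm]
        apply Finset.sum_eq_zero
        intro s _
        rw [if_neg]
        intro hP
        exact hxm ((snoc_cond x s).1 hP).2
    rw [Finset.sum_congr rfl (fun x _ => hx x)]
    -- now: Σ x : Fin (n+1), if 1 ≤ x ≤ m then f x else 0 = G (k+1) m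
    rw [G]
    rw [Fin.sum_univ_eq_sum_range
      (fun i => if 1 ≤ i ∧ i ≤ m then Nat.choose (i + 1) 2 * G k i else 0)]
    rw [← Finset.sum_filter]
    apply Finset.sum_congr
    · ext i
      simp only [Finset.mem_filter, Finset.mem_range, Finset.mem_Icc]
      omega
    · intro i _; rfl

/-- `LS(n+k, n) = 2^k · Σ_{1 ≤ t₁ ≤ t₂ ≤ ⋯ ≤ t_k ≤ n} ∏_{j=1}^{k} C(t_j + 1, 2)`. -/
theorem LS_eq_sum_chains (k : ℕ) (hk : 1 ≤ k) (n : ℕ) (hn : 1 ≤ n) :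
    LS (n + k) n =
      2 ^ k *
        ∑ t ∈ Finset.univ.filter
            (fun t : Fin k → Fin (n + 1) =>
              (∀ j₁ j₂ : Fin k, j₁ ≤ j₂ → t j₁ ≤ t j₂) ∧ ∀ j, 1 ≤ (t j : ℕ)),
          ∏ j : Fin k, Nat.choose ((t j : ℕ) + 1) 2 := by
  rw [LS_G k n, ← sum_chains n k n le_rfl]
  congr 1
  apply Finset.sum_congr _ (fun _ _ => rfl)
  apply Finset.filter_congr
  intro t _
  constructor
  · rintro ⟨h1, h2⟩
    exact ⟨h1, fun j => ((h2 j).1 : _)⟩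
  · rintro ⟨h1, h2⟩
    exact ⟨h1, fun j => ⟨h2 j, Fin.is_le _⟩⟩
end

section
/- Let a ≥ 0 and b be given integers. Then for every rational (or real) x, C(x−b, 2)·C(x, a) = C(a+2, 2)·C(x, a+2) + (a+1)(a−b)·C(x, a+1) + C(a−b, 2)·C(x, a), where C(y, j) denotes the generalized binomial coefficient y(y−1)⋯(y−j+1)/j! for an element y of the field and a natural number j, and C(a+2,2), C(a−b,2) are ordinary integer binomial coefficients m(m−1)/2. -/
/-- The generalized binomial coefficient `C(x, j) = x(x−1)⋯(x−j+1)/j!` for `x : ℚ`. -/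
def qchoose (x : ℚ) (j : ℕ) : ℚ :=
  (∏ i ∈ Finset.range j, (x - i)) / (Nat.factorial j)

/-- For an integer `m`, the binomial coefficient `C(m, 2) = m(m−1)/2`. -/
def c2 (m : ℤ) : ℤ := m * (m - 1) / 2

lemma c2_cast (m : ℤ) : (c2 m : ℚ) = m * (m - 1) / 2 := by
  obtain ⟨k, hk⟩ := Int.even_mul_succ_self (m - 1)
  have hm : m * (m - 1) = 2 * k := by linarith
  have hmq : (m : ℚ) * (m - 1) = 2 * k := by exact_mod_cast hm
  unfold c2
  rw [hm, Int.mul_ediv_cancel_left _ two_ne_zero]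
  linarith

lemma qchoose_succ (x : ℚ) (j : ℕ) :
    qchoose x (j + 1) = qchoose x j * (x - j) / (j + 1) := by
  unfold qchoose
  rw [Finset.prod_range_succ, Nat.factorial_succ]
  push_cast
  rw [div_mul_eq_mul_div, div_div]
  rw [mul_comm ((j:ℚ) + 1)]

theorem qchoose_mul_expansion (a : ℕ) (b : ℤ) (x : ℚ) :
    qchoose (x - b) 2 * qchoose x a =
      (c2 ((a : ℤ) + 2) : ℚ) * qchoose x (a + 2) +
        ((a : ℚ) + 1) * ((a : ℚ) - b) * qchoose x (a + 1) +
        (c2 ((a : ℤ) - b) : ℚ) * qchoose x a := by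
  have h2 : qchoose (x - b) 2 = (x - b) * (x - b - 1) / 2 := by
    simp [qchoose, Finset.prod_range_succ]
  rw [h2, qchoose_succ, qchoose_succ, c2_cast, c2_cast]
  have ha1 : ((a : ℚ) + 1) ≠ 0 := by positivity
  have ha2 : ((a : ℚ) + 1 + 1) ≠ 0 := by positivity
  push_cast
  field_simp
  ring
end

section
/- Let γ(k,i) be the integers defined by the stated recurrence. Then for every k ≥ 1 and every i with k+2 ≤ i ≤ 3k, the coefficient γ(k,i) is a positive integer. -/
/-- The coefficients `γ(k, i)`; note `gam 0 i = δ_{i,0}` and `gam k i = 0` for `i < 0`. -/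
def gam : ℕ → ℤ → ℤ
  | 0, i => if i = 0 then 1 else 0
  | k + 1, i =>
      c2 (i - (k : ℤ) - 1) * gam k (i - 1) +
        (i - 1) * (i - (k : ℤ) - 2) * gam k (i - 2) +
        c2 (i - 1) * gam k (i - 3)

lemma c2_nonneg (m : ℤ) : 0 ≤ c2 m := by
  have h : 0 ≤ m * (m - 1) := by
    rcases le_or_gt m 0 with h | h
    · nlinarith
    · exact mul_nonneg (by linarith) (by omega)
  exact Int.ediv_nonneg h (by norm_num)

lemma c2_pos {m : ℤ} (h : 2 ≤ m) : 0 < c2 m := by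
  have h2 : (1 : ℤ) * 2 ≤ m * (m - 1) := by nlinarith
  have h3 : (1:ℤ) ≤ m * (m - 1) / 2 := (Int.le_ediv_iff_mul_le (by norm_num : (0:ℤ) < 2)).2 h2
  exact lt_of_lt_of_le one_pos h3

lemma gam_key : ∀ k : ℕ, (∀ i : ℤ, 0 ≤ gam k i) ∧
    (∀ i : ℤ, gam k i ≠ 0 → ((k:ℤ) + 2 ≤ i ∧ i ≤ 3 * k) ∨ (k = 0 ∧ i = 0)) ∧
    (∀ i : ℤ, 1 ≤ k → (k:ℤ) + 2 ≤ i → i ≤ 3 * k → 0 < gam k i) := by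
  intro k
  induction k with
  | zero =>
    refine ⟨fun i => ?_, fun i hne => ?_, fun i h => by omega⟩
    · simp only [gam]; split <;> norm_num
    · right
      constructor
      · rfl
      · by_contra h
        simp only [gam, if_neg h] at hne
        exact hne rfl
  | succ k ih =>
    obtain ⟨hnn, hsup, hpos⟩ := ih
    -- nonnegativity of the middle term
    have ht2 : ∀ i : ℤ, 0 ≤ (i - 1) * (i - (k : ℤ) - 2) * gam k (i - 2) := by
      intro i
      by_cases hz : gam k (i - 2) = 0
      · rw [hz]; ring_nf; simp
      · rcases hsup _ hz with ⟨ha, hb⟩ | ⟨hk0, hi⟩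
        · have : (0:ℤ) ≤ (i - 1) * (i - (k : ℤ) - 2) := by
            apply mul_nonneg <;> omega
          exact mul_nonneg this (hnn _)
        · subst hk0
          have : i = 2 := by omega
          subst this
          norm_num
    have ht1 : ∀ i : ℤ, 0 ≤ c2 (i - (k:ℤ) - 1) * gam k (i - 1) :=
      fun i => mul_nonneg (c2_nonneg _) (hnn _)
    have ht3 : ∀ i : ℤ, 0 ≤ c2 (i - 1) * gam k (i - 3) :=
      fun i => mul_nonneg (c2_nonneg _) (hnn _)
    have hnn' : ∀ i : ℤ, 0 ≤ gam (k + 1) i := by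
      intro i
      show 0 ≤ c2 (i - (k : ℤ) - 1) * gam k (i - 1) +
        (i - 1) * (i - (k : ℤ) - 2) * gam k (i - 2) + c2 (i - 1) * gam k (i - 3)
      have := ht1 i; have := ht2 i; have := ht3 i; linarith
    refine ⟨hnn', fun i hne => ?_, fun i _ hlo hhi => ?_⟩
    · -- support
      left
      push_cast
      have hne' : c2 (i - (k : ℤ) - 1) * gam k (i - 1) +
          (i - 1) * (i - (k : ℤ) - 2) * gam k (i - 2) + c2 (i - 1) * gam k (i - 3) ≠ 0 := hne
      have h1 : c2 (i - (k : ℤ) - 1) * gam k (i - 1) ≠ 0 ∨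
          (i - 1) * (i - (k : ℤ) - 2) * gam k (i - 2) ≠ 0 ∨
          c2 (i - 1) * gam k (i - 3) ≠ 0 := by
        by_contra h
        push_neg at h
        obtain ⟨a, b, c⟩ := h
        rw [a, b, c] at hne'
        simp at hne'
      rcases h1 with h | h | h
      · have hg : gam k (i - 1) ≠ 0 := fun hz => h (by rw [hz, mul_zero])
        have hc : c2 (i - (k:ℤ) - 1) ≠ 0 := fun hz => h (by rw [hz, zero_mul])
        rcases hsup _ hg with ⟨ha, hb⟩ | ⟨hk0, hi⟩
        · constructor <;> omega
        · exfalso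
          subst hk0
          have : i = 1 := by omega
          subst this
          apply hc
          norm_num [c2]
      · have hg : gam k (i - 2) ≠ 0 := fun hz => h (by rw [hz, mul_zero])
        have hc : (i - 1) * (i - (k:ℤ) - 2) ≠ 0 := fun hz => h (by rw [hz, zero_mul])
        rcases hsup _ hg with ⟨ha, hb⟩ | ⟨hk0, hi⟩
        · constructor <;> omega
        · exfalso
          subst hk0
          have : i = 2 := by omega
          subst this
          apply hc
          norm_num
      · have hg : gam k (i - 3) ≠ 0 := fun hz => h (by rw [hz, mul_zero])
        have hc : c2 (i - 1) ≠ 0 := fun hz => h (by rw [hz, zero_mul])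
        rcases hsup _ hg with ⟨ha, hb⟩ | ⟨hk0, hi⟩
        · constructor <;> omega
        · subst hk0
          have : i = 3 := by omega
          subst this
          norm_num
    · -- positivity
      push_cast at hlo hhi
      show 0 < c2 (i - (k : ℤ) - 1) * gam k (i - 1) +
        (i - 1) * (i - (k : ℤ) - 2) * gam k (i - 2) + c2 (i - 1) * gam k (i - 3)
      rcases Nat.eq_zero_or_pos k with hk0 | hk1
      · subst hk0
        have : i = 3 := by push_cast at hlo hhi; omega
        subst this
        norm_num [gam, c2]
      have hk1' : (1:ℤ) ≤ k := by exact_mod_cast hk1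
      rcases lt_or_ge i (3 * (k:ℤ) + 2) with hc1 | hc1
      · -- use first term
        have hp : 0 < c2 (i - (k:ℤ) - 1) * gam k (i - 1) := by
          apply mul_pos (c2_pos (by omega)) (hpos _ hk1 (by omega) (by omega))
        have := ht2 i; have := ht3 i; linarith
      rcases lt_or_ge i (3 * (k:ℤ) + 3) with hc2 | hc2
      · -- i = 3k+2, use second term
        have hp : 0 < (i - 1) * (i - (k:ℤ) - 2) * gam k (i - 2) := by
          apply mul_pos (mul_pos (by omega) (by omega)) (hpos _ hk1 (by omega) (by omega))
        have := ht1 i; have := ht3 i; linarith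
      · -- i = 3k+3, use third term
        have hp : 0 < c2 (i - 1) * gam k (i - 3) := by
          apply mul_pos (c2_pos (by omega)) (hpos _ hk1 (by omega) (by omega))
        have := ht1 i; have := ht2 i; linarith

theorem gam_pos (k : ℕ) (hk : 1 ≤ k) (i : ℕ) (h1 : k + 2 ≤ i) (h2 : i ≤ 3 * k) :
    0 < gam k (i : ℤ) := by
  exact (gam_key k).2.2 i hk (by exact_mod_cast Nat.cast_le.2 h1 |>.trans_eq (by push_cast; ring)) (by exact_mod_cast h2)
end

section
/- For every k ≥ 1, γ(k, 3k) = (3k)! / (k! · 6^k). (Equivalently, γ(k,3k) is the number of partitions of a 3k-element set into blocks of size 3.) -/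
lemma two_mul_c2 (m : ℤ) : 2 * c2 m = m * (m - 1) := by
  have h : (2 : ℤ) ∣ m * (m - 1) := by
    obtain ⟨t, ht⟩ := Int.even_mul_succ_self (m - 1)
    exact ⟨t, by linarith⟩
  rw [c2, Int.mul_ediv_cancel' h]

lemma gam_vanish : ∀ k : ℕ, ∀ i : ℤ, 3 * (k : ℤ) < i → gam k i = 0 := by
  intro k
  induction k with
  | zero =>
    intro i hi
    simp only [gam]
    rw [if_neg]
    omega
  | succ k ih =>
    intro i hi
    have hc : 3 * ((k : ℤ) + 1) < i := by push_cast at hi; linarith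
    rw [gam, ih (i - 1) (by omega), ih (i - 2) (by omega), ih (i - 3) (by omega)]
    ring

lemma gam_eq (k : ℕ) :
    (gam k (3 * (k : ℤ)) : ℚ) =
      (Nat.factorial (3 * k) : ℚ) / ((Nat.factorial k : ℚ) * 6 ^ k) := by
  induction k with
  | zero => simp [gam]
  | succ k ih =>
    have key : gam (k + 1) (3 * ((k + 1 : ℕ) : ℤ)) =
        c2 (3 * (k : ℤ) + 2) * gam k (3 * (k : ℤ)) := by
      rw [gam]
      have e1 : 3 * ((k + 1 : ℕ) : ℤ) - 1 = 3 * (k : ℤ) + 2 := by push_cast; ring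
      have e2 : 3 * ((k + 1 : ℕ) : ℤ) - 2 = 3 * (k : ℤ) + 1 := by push_cast; ring
      have e3 : 3 * ((k + 1 : ℕ) : ℤ) - 3 = 3 * (k : ℤ) := by push_cast; ring
      rw [e1, e2, e3, gam_vanish k (3 * (k : ℤ) + 2) (by omega),
        gam_vanish k (3 * (k : ℤ) + 1) (by omega)]
      ring
    have hc2 : (c2 (3 * (k : ℤ) + 2) : ℚ) = ((3 * k + 2) * (3 * k + 1) : ℚ) / 2 := by
      have h := two_mul_c2 (3 * (k : ℤ) + 2)
      have h' : (2 : ℚ) * (c2 (3 * (k : ℤ) + 2) : ℚ) = (3 * k + 2) * (3 * k + 1) := by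
        have := congrArg (fun x : ℤ => (x : ℚ)) h
        push_cast at this
        linarith
      linarith
    have hfac : (Nat.factorial (3 * (k + 1)) : ℚ) =
        ((3 * k + 3) : ℚ) * ((3 * k + 2) : ℚ) * ((3 * k + 1) : ℚ) *
          (Nat.factorial (3 * k) : ℚ) := by
      have : 3 * (k + 1) = (3 * k + 2) + 1 := by ring
      rw [this, Nat.factorial_succ, show 3 * k + 2 = (3 * k + 1) + 1 from rfl,
        Nat.factorial_succ, Nat.factorial_succ]
      push_cast
      ring
    rw [key]
    push_cast [hc2]
    rw [ih]
    rw [hfac, Nat.factorial_succ]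
    have h1 : (Nat.factorial k : ℚ) ≠ 0 := Nat.cast_ne_zero.mpr (Nat.factorial_ne_zero k)
    have h2 : (6 : ℚ) ^ k ≠ 0 := by positivity
    have h3 : ((k : ℚ) + 1) ≠ 0 := by positivity
    field_simp
    push_cast
    ring

theorem gam_top (k : ℕ) (hk : 1 ≤ k) :
    (gam k (3 * (k : ℤ)) : ℚ) =
      (Nat.factorial (3 * k) : ℚ) / ((Nat.factorial k : ℚ) * 6 ^ k) := by
  exact gam_eq k
end

section
/- For every k ≥ 1 there exists a polynomial p ∈ ℚ[x] of degree 3k with leading coefficient 1/(k!·3^k) such that LS(n+k, n) = p(n) for all integers n ≥ 1. -/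
open Polynomial

lemma LS_succ_succ (n k : ℕ) :
    LS (n+1) (k+1) = LS n k + (k+1)*(k+2) * LS n (k+1) := rfl

lemma LS_zero' (k : ℕ) : LS (k+1) 0 = 0 := rfl

lemma LS_lt : ∀ n k : ℕ, n < k → LS n k = 0 := by
  intro n
  induction n with
  | zero =>
    intro k hk
    obtain ⟨j, rfl⟩ := Nat.exists_eq_succ_of_ne_zero (by omega : k ≠ 0)
    rfl
  | succ m ih =>
    intro k hk
    obtain ⟨j, rfl⟩ := Nat.exists_eq_succ_of_ne_zero (by omega : k ≠ 0)
    rw [LS_succ_succ, ih j (by omega), ih (j+1) (by omega)]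
    simp

lemma LS_self : ∀ n : ℕ, LS n n = 1 := by
  intro n
  induction n with
  | zero => rfl
  | succ m ih => rw [LS_succ_succ, ih, LS_lt m (m+1) (by omega)]; simp

lemma disc_sum : ∀ d : ℕ, ∀ r : ℚ[X], r.degree ≤ (d : ℕ) → ∃ S : ℚ[X],
    S.degree ≤ ((d+1 : ℕ) : WithBot ℕ) ∧ S.coeff (d+1) = r.coeff d / (d+1) ∧
    S.eval 0 = 0 ∧ ∀ x : ℚ, S.eval (x+1) = S.eval x + r.eval (x+1) := by
  intro d
  induction d with
  | zero =>
    intro r hr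
    have hr' : r = C (r.coeff 0) := eq_C_of_degree_le_zero hr
    refine ⟨C (r.coeff 0) * X, ?_, ?_, by simp, ?_⟩
    · have := degree_C_mul_X_pow_le 1 (r.coeff 0)
      rw [pow_one] at this
      exact this
    · rw [coeff_C_mul, coeff_X_one, mul_one]
      norm_num
    · intro x
      rw [hr']
      simp
      ring
  | succ d ih =>
    intro r hr
    set c : ℚ := r.coeff (d+1) / ((d:ℚ)+2) with hc
    set g : ℚ[X] := C c * (X^(d+2) - (X + C (-1))^(d+2)) with hg
    have hd2 : ((d:ℚ)+2) ≠ 0 := by positivity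
    have hgc : ∀ m : ℕ, g.coeff m =
        c * ((if m = d+2 then (1:ℚ) else 0) - (-1:ℚ)^(d+2-m) * ((d+2).choose m)) := by
      intro m
      rw [hg, coeff_C_mul, coeff_sub, coeff_X_pow, coeff_X_add_C_pow]
    have hrg : (r - g).degree ≤ (d : ℕ) := by
      rw [degree_le_iff_coeff_zero]
      intro m hm
      have hm' : d + 1 ≤ m := by exact_mod_cast Nat.add_one_le_iff.mpr (by exact_mod_cast hm)
      rcases eq_or_lt_of_le hm' with h1 | h1
      · subst h1
        rw [coeff_sub, hgc]
        have h2 : d + 2 - (d+1) = 1 := by omega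
        rw [h2, if_neg (by omega : ¬ d+1 = d+2)]
        have h3 : ((d+2).choose (d+1) : ℚ) = (d:ℚ) + 2 := by
          rw [Nat.choose_succ_self_right]
          push_cast; ring
        rw [h3, hc]
        field_simp
        ring
      · have hr0 : r.coeff m = 0 := by
          apply coeff_eq_zero_of_degree_lt
          refine lt_of_le_of_lt hr ?_
          exact_mod_cast (by exact_mod_cast h1 : (d+1 : ℕ) < m)
        rw [coeff_sub, hr0, hgc, zero_sub, neg_eq_zero]
        rcases eq_or_lt_of_le (by omega : d + 2 ≤ m) with h2 | h2
        · rw [if_pos h2.symm, ← h2]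
          simp
        · rw [if_neg (by omega : ¬ m = d+2), Nat.choose_eq_zero_of_lt h2]
          simp
    obtain ⟨S', hS'deg, _, hS'0, hS'ev⟩ := ih (r - g) hrg
    refine ⟨C c * X^(d+2) + S', ?_, ?_, ?_, ?_⟩
    · apply (degree_add_le _ _).trans
      apply max_le
      · exact degree_C_mul_X_pow_le (d+2) c
      · exact hS'deg.trans (by exact_mod_cast Nat.le_succ (d+1))
    · have h0 : S'.coeff (d+2) = 0 := by
        apply coeff_eq_zero_of_degree_lt
        exact lt_of_le_of_lt hS'deg (by exact_mod_cast Nat.lt_succ_self (d+1))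
      have h1 : (d+1:ℕ)+1 = d+2 := by omega
      rw [h1] at h0 ⊢
      rw [coeff_add, coeff_C_mul, coeff_X_pow, if_pos rfl, h0, hc]
      push_cast
      ring_nf
    · simp [hS'0]
    · intro x
      have h := hS'ev x
      simp only [eval_add, eval_mul, eval_C, eval_pow, eval_X, eval_sub, hg, eval_neg,
        eval_one] at h ⊢
      rw [h]
      ring

lemma LS_aux (k : ℕ) : ∃ p : ℚ[X], p.degree ≤ ((3*k : ℕ) : WithBot ℕ) ∧
    p.coeff (3*k) = 1 / ((Nat.factorial k : ℚ) * 3 ^ k) ∧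
    ∀ n : ℕ, p.eval (n : ℚ) = LS (n + k) n := by
  induction k with
  | zero =>
    refine ⟨1, by simp, by simp, ?_⟩
    intro n
    simp [LS_self]
  | succ k ih =>
    obtain ⟨p, hdeg, hcoeff, hev⟩ := ih
    set r : ℚ[X] := (X^2 + X) * p with hr
    have hrdeg : r.degree ≤ ((3*k+2 : ℕ) : WithBot ℕ) := by
      apply (degree_mul_le _ _).trans
      have hXX : (X^2 + X : ℚ[X]).degree ≤ 2 := by
        apply (degree_add_le _ _).trans
        rw [degree_X_pow, degree_X]
        exact max_le le_rfl (by norm_num)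
      calc (X^2 + X : ℚ[X]).degree + p.degree ≤ 2 + ((3*k:ℕ) : WithBot ℕ) :=
            add_le_add hXX hdeg
        _ ≤ ((3*k+2 : ℕ) : WithBot ℕ) := by
            push_cast
            rw [add_comm]
    have hrcoeff : r.coeff (3*k+2) = 1 / ((Nat.factorial k : ℚ) * 3 ^ k) := by
      rw [hr, add_mul, coeff_add, coeff_X_pow_mul]
      have h2 : (X * p).coeff (3*k+2) = p.coeff (3*k+1) := by
        have := coeff_X_mul p (3*k+1)
        simpa using this
      have h3 : p.coeff (3*k+1) = 0 := by
        apply coeff_eq_zero_of_degree_lt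
        exact lt_of_le_of_lt hdeg (by exact_mod_cast Nat.lt_succ_self (3*k))
      rw [h2, h3, hcoeff, add_zero]
    obtain ⟨S, hSdeg, hScoeff, hS0, hSev⟩ := disc_sum (3*k+2) r hrdeg
    have hidx : 3*(k+1) = 3*k+2+1 := by ring
    refine ⟨S, ?_, ?_, ?_⟩
    · rw [hidx]; exact hSdeg
    · rw [hidx, hScoeff, hrcoeff, Nat.factorial_succ]
      have h1 : (Nat.factorial k : ℚ) ≠ 0 := by positivity
      have h2 : ((3*k+2:ℕ):ℚ) + 1 ≠ 0 := by positivity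
      push_cast
      field_simp
      ring
    · intro n
      induction n with
      | zero =>
        have e : 0 + (k+1) = k+1 := by omega
        rw [e, LS_zero']
        simpa using hS0
      | succ n ihn =>
        have hrecur : (LS (n+1+(k+1)) (n+1) : ℚ)
            = (LS (n+k+1) n : ℚ)
              + ((n:ℚ)+1)*((n:ℚ)+2)*(LS (n+k+1) (n+1) : ℚ) := by
          have e : n+1+(k+1) = (n+k+1)+1 := by omega
          rw [e, LS_succ_succ]
          push_cast; ring
        have hp := hev (n+1)
        have e2 : n+1+k = n+k+1 := by omega
        rw [e2] at hp
        push_cast at hp ⊢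
        rw [hSev (n:ℚ), ihn, hrecur, hr]
        simp only [eval_mul, eval_add, eval_pow, eval_X]
        rw [hp]
        ring

theorem LS_polynomiality (k : ℕ) (hk : 1 ≤ k) :
    ∃ p : Polynomial ℚ, p.degree = 3 * k ∧
      p.leadingCoeff = 1 / ((Nat.factorial k : ℚ) * 3 ^ k) ∧
      ∀ n : ℕ, 1 ≤ n → p.eval (n : ℚ) = LS (n + k) n := by
  obtain ⟨p, hdeg, hcoeff, hev⟩ := LS_aux k
  have hne : p.coeff (3*k) ≠ 0 := by
    rw [hcoeff]
    positivity
  have hdeg' : p.degree = ((3*k : ℕ) : WithBot ℕ) :=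
    le_antisymm hdeg (le_degree_of_ne_zero hne)
  refine ⟨p, ?_, ?_, fun n _ => hev n⟩
  · rw [hdeg']; push_cast; ring
  · rw [leadingCoeff, natDegree_eq_of_degree_eq_some hdeg', hcoeff]
end
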